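/- Let X be a real normed space such that for all x, y ∈ X with ‖x‖ = ‖y‖ and all nonzero real γ, one has ‖x+y‖ ≤ ‖γx + γ⁻¹y‖. Then X is an inner product space, i.e., the norm satisfies the parallelogram law. -/

import Mathlib

set_option maxHeartbeats 1000000

section LorchAux

variable {X : Type*} [NormedAddCommGroup X] [NormedSpace ℝ X]

lemma lorch_ficken
    (h : ∀ x y : X, ‖x‖ = ‖y‖ → ∀ γ : ℝ, γ ≠ 0 → ‖x + y‖ ≤ ‖γ • x + γ⁻¹ • y‖)
    (x y : X) (hxy : ‖x‖ = ‖y‖) (γ : ℝ) (hγ : 0 < γ) :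
    ‖γ • x + γ⁻¹ • y‖ = ‖γ⁻¹ • x + γ • y‖ := by
  suffices H : ∀ x y : X, ‖x‖ = ‖y‖ → ‖γ⁻¹ • x + γ • y‖ ≤ ‖γ • x + γ⁻¹ • y‖ by
    refine le_antisymm ?_ (H x y hxy)
    have := H y x hxy.symm
    rwa [add_comm (γ⁻¹ • y), add_comm (γ • y)] at this
  intro x y hxy
  by_contra hlt
  push_neg at hlt
  set A := ‖γ • x + γ⁻¹ • y‖ with hAdef
  set B := ‖γ⁻¹ • x + γ • y‖ with hBdef
  have hγ0 : γ ≠ 0 := hγ.ne'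
  -- x + y ≠ 0
  have hxy0 : x + y ≠ 0 := by
    intro h0
    have hy : y = -x := by
      rw [add_comm] at h0; exact eq_neg_of_add_eq_zero_left h0
    have hA : A = |γ - γ⁻¹| * ‖x‖ := by
      rw [hAdef, hy, smul_neg, ← sub_eq_add_neg, ← sub_smul, norm_smul, Real.norm_eq_abs]
    have hB : B = |γ - γ⁻¹| * ‖x‖ := by
      rw [hBdef, hy, smul_neg, ← sub_eq_add_neg, ← sub_smul, norm_smul, Real.norm_eq_abs,
        abs_sub_comm]
    rw [hA, hB] at hlt; exact lt_irrefl _ hlt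
  -- A > 0
  have hB : 0 ≤ A := norm_nonneg _
  have hA0 : 0 < A := by
    rcases hB.lt_or_eq with h' | h'
    · exact h'
    · exfalso
      have hz : γ • x + γ⁻¹ • y = 0 := by
        rw [← norm_eq_zero]; rw [hAdef] at h'; linarith
      have hyx : y = -((γ * γ) • x) := by
        have : γ⁻¹ • y = -(γ • x) := by
          rw [eq_neg_iff_add_eq_zero, add_comm]; exact hz
        calc y = γ • (γ⁻¹ • y) := by rw [smul_smul, mul_inv_cancel₀ hγ0, one_smul]
        _ = -((γ * γ) • x) := by rw [this, smul_neg, smul_smul]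
      have hny : ‖y‖ = γ * γ * ‖x‖ := by
        rw [hyx, norm_neg, norm_smul, Real.norm_eq_abs, abs_of_pos (mul_pos hγ hγ)]
      rcases eq_or_ne x 0 with hx0 | hx0
      · apply hxy0; rw [hx0] at hyx ⊢; simp at hyx ⊢; exact hyx
      · have hxpos : 0 < ‖x‖ := norm_pos_iff.2 hx0
        have : γ * γ = 1 := by
          have := hxy.trans hny
          nlinarith
        have hγ1 : γ = 1 := by nlinarith
        apply hxy0
        rw [hyx, hγ1] at *
        simp
  have hBpos : 0 < B := hA0.trans hlt
  set c := A / B with hcdef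
  have hc : 0 < c := div_pos hA0 hBpos
  have hc1 : c < 1 := (div_lt_one hBpos).2 hlt
  set δ := Real.sqrt c with hδdef
  have hδpos : 0 < δ := Real.sqrt_pos.2 hc
  have hδsq : δ * δ = c := Real.mul_self_sqrt hc.le
  set X' := γ • x + γ⁻¹ • y with hX'
  set Y' := c • (γ⁻¹ • x + γ • y) with hY'
  have hnorm : ‖X'‖ = ‖Y'‖ := by
    rw [hY', norm_smul, Real.norm_eq_abs, abs_of_pos hc, hcdef]
    rw [div_mul_cancel₀ _ hBpos.ne']
  -- upper bound
  have key1 := h X' Y' hnorm δ hδpos.ne'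
  have id1 : δ • X' + δ⁻¹ • Y' = (δ * (γ + γ⁻¹)) • (x + y) := by
    rw [hX', hY', ← hδsq]
    match_scalars <;> (field_simp <;> ring)
  have hub : ‖X' + Y'‖ ≤ δ * (γ + γ⁻¹) * ‖x + y‖ := by
    calc ‖X' + Y'‖ ≤ ‖δ • X' + δ⁻¹ • Y'‖ := key1
    _ = δ * (γ + γ⁻¹) * ‖x + y‖ := by
        rw [id1, norm_smul, Real.norm_eq_abs, abs_of_pos (by positivity)]
  -- lower bound
  set aa := γ + c * γ⁻¹ with haa
  set bb := γ⁻¹ + c * γ with hbb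
  have haapos : 0 < aa := by positivity
  have hbbpos : 0 < bb := by positivity
  set ν := Real.sqrt (aa / bb) with hν
  have hνpos : 0 < ν := Real.sqrt_pos.2 (by positivity)
  have hsab : Real.sqrt (aa * bb) * ν = aa := by
    rw [hν, ← Real.sqrt_mul (by positivity)]
    rw [show aa * bb * (aa / bb) = aa ^ 2 by field_simp]
    exact Real.sqrt_sq haapos.le
  have hsab2 : Real.sqrt (aa * bb) * ν⁻¹ = bb := by
    rw [hν, ← Real.sqrt_inv, ← Real.sqrt_mul (by positivity)]
    rw [show aa * bb * (aa / bb)⁻¹ = bb ^ 2 by field_simp]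
    exact Real.sqrt_sq hbbpos.le
  have id2 : X' + Y' = Real.sqrt (aa * bb) • (ν • x + ν⁻¹ • y) := by
    have hr : Real.sqrt (aa * bb) • (ν • x + ν⁻¹ • y) = aa • x + bb • y := by
      rw [smul_add, smul_smul, smul_smul, hsab, hsab2]
    rw [hr, hX', hY', haa, hbb]
    match_scalars <;> ring
  have hlb : Real.sqrt (aa * bb) * ‖x + y‖ ≤ ‖X' + Y'‖ := by
    rw [id2, norm_smul, Real.norm_eq_abs, abs_of_pos (by positivity)]
    have := h x y hxy ν hνpos.ne'
    exact mul_le_mul_of_nonneg_left this (Real.sqrt_nonneg _)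
  -- combine
  have hxyn : 0 < ‖x + y‖ := norm_pos_iff.2 hxy0
  have hle : Real.sqrt (aa * bb) ≤ δ * (γ + γ⁻¹) :=
    le_of_mul_le_mul_right (hlb.trans hub) hxyn
  have hsq : aa * bb ≤ c * (γ + γ⁻¹) ^ 2 := by
    have h2 := mul_le_mul hle hle (Real.sqrt_nonneg _) (by positivity)
    rw [Real.mul_self_sqrt (by positivity)] at h2
    calc aa * bb ≤ δ * (γ + γ⁻¹) * (δ * (γ + γ⁻¹)) := h2
    _ = c * (γ + γ⁻¹) ^ 2 := by rw [← hδsq]; ring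
  have hγγ : γ * γ⁻¹ = 1 := mul_inv_cancel₀ hγ0
  nlinarith [sq_nonneg (1 - c), hγγ, hsq, hc1]

lemma lorch_feq
    (h : ∀ x y : X, ‖x‖ = ‖y‖ → ∀ γ : ℝ, γ ≠ 0 → ‖x + y‖ ≤ ‖γ • x + γ⁻¹ • y‖)
    (u v : X) (hu : ‖u‖ = 1) (hv : ‖v‖ = 1)
    (hind : ∀ t : ℝ, u + t • v ≠ 0) (t k : ℝ) (hk : 0 < k) :
    ‖u + (t + k) • v‖ = (k / ‖u + t • v‖) *
      ‖u + (t + ‖u + t • v‖ ^ 2 / k) • v‖ := by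
  set F := ‖u + t • v‖ with hF
  have hFpos : 0 < F := norm_pos_iff.2 (hind t)
  set γ := Real.sqrt (F / k) with hγdef
  have hγpos : 0 < γ := Real.sqrt_pos.2 (by positivity)
  have hγsq : γ * γ * k = F := by
    rw [Real.mul_self_sqrt (by positivity)]
    field_simp
  set p := F⁻¹ • (u + t • v) with hp
  have hpnorm : ‖p‖ = ‖v‖ := by
    rw [hp, norm_smul, Real.norm_eq_abs, abs_of_pos (by positivity), ← hF, hv,
      inv_mul_cancel₀ hFpos.ne']
  have fick := lorch_ficken h p v hpnorm γ hγpos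
  have e1 : γ • p + γ⁻¹ • v = (γ / F) • (u + (t + k) • v) := by
    rw [hp]
    match_scalars
    · field_simp
    · field_simp
      linear_combination (-1 : ℝ) * hγsq
  have e2 : γ⁻¹ • p + γ • v = (γ⁻¹ / F) • (u + (t + F ^ 2 / k) • v) := by
    rw [hp]
    match_scalars
    · field_simp
    · field_simp
      linear_combination F * hγsq
  rw [e1, e2, norm_smul, norm_smul, Real.norm_eq_abs, Real.norm_eq_abs,
    abs_of_pos (by positivity), abs_of_pos (by positivity)] at fick
  have hne : ‖u + (t + F ^ 2 / k) • v‖ = ‖u + (t + F ^ 2 / k) • v‖ := rfl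
  -- from (γ/F) * A = (γ⁻¹/F) * B conclude A = (k/F) * B
  have hγ2 : γ⁻¹ = γ * k / F := by
    field_simp
    linear_combination (-1 : ℝ) * hγsq
  rw [hγ2] at fick
  have : γ / F * ‖u + (t + k) • v‖ = γ / F * ((k / F) * ‖u + (t + F ^ 2 / k) • v‖) := by
    rw [fick]; ring
  exact mul_left_cancel₀ (by positivity) this

lemma lorch_pyth
    (h : ∀ x y : X, ‖x‖ = ‖y‖ → ∀ γ : ℝ, γ ≠ 0 → ‖x + y‖ ≤ ‖γ • x + γ⁻¹ • y‖)
    (u v : X) (hu : ‖u‖ = 1) (hv : ‖v‖ = 1)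
    (hind : ∀ t : ℝ, u + t • v ≠ 0) :
    ∃ σ : ℝ, ∀ t : ℝ, ‖u + t • v‖ ^ 2 = t ^ 2 + 2 * σ * t + 1 := by
  set F : ℝ → ℝ := fun t => ‖u + t • v‖ with hFdef
  have Fpos : ∀ t, 0 < F t := fun t => norm_pos_iff.2 (hind t)
  have F0 : F 0 = 1 := by simp [hFdef, hu]
  have Fcont : Continuous F := ((continuous_const.add (continuous_id.smul continuous_const)).norm)
  have Flip : ∀ a b : ℝ, |F b - F a| ≤ |b - a| := by
    intro a b
    have h1 := abs_norm_sub_norm_le (u + b • v) (u + a • v)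
    rwa [add_sub_add_left_eq_sub, ← sub_smul, norm_smul, Real.norm_eq_abs, hv, mul_one] at h1
  set τ : ℝ → ℝ := fun r => F r - r with hτdef
  have τanti : Antitone τ := by
    intro a b hab
    have := Flip a b
    have h2 : F b - F a ≤ |b - a| := le_trans (le_abs_self _) this
    rw [abs_of_nonneg (sub_nonneg.2 hab)] at h2
    simp only [hτdef]
    linarith
  have τlb : ∀ r, -1 ≤ τ r := by
    intro r
    have h1 : ‖r • v‖ ≤ ‖u + r • v‖ + ‖u‖ := by
      have := norm_sub_le (u + r • v) u
      simpa using this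
    rw [norm_smul, Real.norm_eq_abs, hv, mul_one, hu] at h1
    have : r ≤ |r| := le_abs_self r
    simp only [hτdef]
    change -1 ≤ F r - r
    have : r ≤ F r + 1 := by
      calc r ≤ |r| := le_abs_self r
      _ ≤ F r + 1 := h1
    linarith
  have hbdd : BddBelow (Set.range τ) := ⟨-1, by rintro _ ⟨r, rfl⟩; exact τlb r⟩
  set σ := sInf (Set.range τ) with hσdef
  have hσle : ∀ r, σ ≤ τ r := fun r => csInf_le hbdd ⟨r, rfl⟩
  have hσlt : ∀ η : ℝ, 0 < η → ∃ r, τ r < σ + η := by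
    intro η hη
    have : σ < σ + η := by linarith
    obtain ⟨x, hx, hr⟩ := exists_lt_of_csInf_lt (s := Set.range τ) ⟨τ 0, ⟨0, rfl⟩⟩ this
    obtain ⟨r, rfl⟩ := hx
    exact ⟨r, hr⟩
  -- the function W
  set W : ℝ → ℝ := fun t => F t ^ 2 - t ^ 2 - 2 * σ * t with hWdef
  have feq : ∀ t k : ℝ, 0 < k → F (t + k) = (k / F t) * F (t + F t ^ 2 / k) :=
    fun t k hk => lorch_feq h u v hu hv hind t k hk
  -- constancy of W
  have Wconst : ∀ a b : ℝ, a < b → W b = W a := by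
    intro a b hab
    obtain ⟨tm, htm, hmin⟩ :=
      isCompact_Icc.exists_isMinOn (Set.nonempty_Icc.2 hab.le) Fcont.continuousOn
    set m := F tm with hmdef
    have hm : 0 < m := Fpos tm
    have hmle : ∀ t ∈ Set.Icc a b, m ≤ F t := fun t ht => hmin ht
    set E0 : ℝ := τ a - σ with hE0def
    have hE0 : 0 ≤ E0 := sub_nonneg.2 (hσle a)
    set Bc : ℝ := |a| + |b| + |σ| + E0 + 1 with hBcdef
    have hBc : 0 < Bc := by positivity
    set C : ℝ := Bc ^ 2 / m ^ 2 + 1 with hCdef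
    have hC : 0 < C := by positivity
    -- single step estimate
    have step : ∀ t ∈ Set.Icc a b, ∀ k : ℝ, 0 < k →
        |W (t + k) - W t| ≤ k ^ 2 * C + 2 * k * (τ (a + m ^ 2 / k) - σ) := by
      intro t ht k hk
      set R := t + F t ^ 2 / k with hRdef
      set ε := τ R - σ with hεdef
      have hta : a ≤ t := ht.1
      have htb : t ≤ b := ht.2
      have hFt : 0 < F t := Fpos t
      have hmF : m ≤ F t := hmle t ht
      have hRa : a + m ^ 2 / k ≤ R := by
        rw [hRdef]
        have h2 : m ^ 2 / k ≤ F t ^ 2 / k := by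
          gcongr
        linarith
      have hRa2 : a ≤ R :=
        le_trans (le_add_of_nonneg_right (by positivity : (0:ℝ) ≤ m ^ 2 / k)) hRa
      have hε0 : 0 ≤ ε := sub_nonneg.2 (hσle R)
      have hε1 : ε ≤ τ (a + m ^ 2 / k) - σ := by
        have := τanti hRa
        simp only [hεdef]
        linarith
      have hεE : ε ≤ E0 := by
        have := τanti hRa2
        simp only [hεdef, hE0def]
        linarith
      have hFR : F R = t + F t ^ 2 / k + σ + ε := by
        simp only [hεdef, hτdef, hRdef]
        ring
      have hstep := feq t k hk
      have hW : W (t + k) - W t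
          = k ^ 2 * ((t + σ + ε) ^ 2 / F t ^ 2 - 1) + 2 * k * ε := by
        simp only [hWdef]
        rw [hstep, ← hRdef, hFR]
        field_simp
        ring
      -- bounds
      have h2t : |t| ≤ |a| + |b| := by
        rw [abs_le]
        constructor
        · have h3 := neg_abs_le a
          have h4 := abs_nonneg b
          linarith
        · have h3 := le_abs_self b
          have h4 := abs_nonneg a
          linarith
      have h1abs : |t + σ + ε| ≤ Bc := by
        calc |t + σ + ε| ≤ |t + σ| + |ε| := abs_add_le _ _
        _ ≤ |t| + |σ| + |ε| := by linarith [abs_add_le t σ]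
        _ ≤ (|a| + |b|) + |σ| + E0 := by rw [abs_of_nonneg hε0]; linarith
        _ ≤ Bc := by rw [hBcdef]; linarith
      have hnum : (t + σ + ε) ^ 2 ≤ Bc ^ 2 := by
        calc (t + σ + ε) ^ 2 = |t + σ + ε| ^ 2 := (sq_abs _).symm
        _ ≤ Bc ^ 2 := by gcongr
      have hden : m ^ 2 ≤ F t ^ 2 := by gcongr
      have hq2 : (t + σ + ε) ^ 2 / F t ^ 2 ≤ Bc ^ 2 / m ^ 2 :=
        div_le_div₀ (by positivity) hnum (by positivity) hden
      have hqnn : 0 ≤ (t + σ + ε) ^ 2 / F t ^ 2 := by positivity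
      have hBm : (0:ℝ) ≤ Bc ^ 2 / m ^ 2 := by positivity
      have h1C : |(t + σ + ε) ^ 2 / F t ^ 2 - 1| ≤ C := by
        rw [abs_le]
        constructor
        · rw [hCdef]; linarith
        · rw [hCdef]; linarith
      rw [hW]
      have hεnn : (0:ℝ) ≤ 2 * k * ε := by positivity
      calc |k ^ 2 * ((t + σ + ε) ^ 2 / F t ^ 2 - 1) + 2 * k * ε|
          ≤ |k ^ 2 * ((t + σ + ε) ^ 2 / F t ^ 2 - 1)| + |2 * k * ε| := abs_add_le _ _
      _ = k ^ 2 * |(t + σ + ε) ^ 2 / F t ^ 2 - 1| + 2 * k * ε := by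
          rw [abs_mul, abs_of_nonneg (by positivity : (0:ℝ) ≤ k ^ 2),
            abs_of_nonneg hεnn]
      _ ≤ k ^ 2 * C + 2 * k * (τ (a + m ^ 2 / k) - σ) := by
          have h5 : k ^ 2 * |(t + σ + ε) ^ 2 / F t ^ 2 - 1| ≤ k ^ 2 * C :=
            mul_le_mul_of_nonneg_left h1C (by positivity)
          have h6 : 2 * k * ε ≤ 2 * k * (τ (a + m ^ 2 / k) - σ) :=
            mul_le_mul_of_nonneg_left hε1 (by positivity)
          linarith
    -- telescoping
    have key : ∀ η : ℝ, 0 < η → |W b - W a| ≤ η := by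
      intro η hη
      have hba : 0 < b - a := sub_pos.2 hab
      obtain ⟨r₀, hr₀⟩ := hσlt (η / (4 * (b - a))) (by positivity)
      set h0 : ℝ := min (η / (2 * (b - a) * C)) (m ^ 2 / (|r₀ - a| + 1)) with hh0def
      have hh0 : 0 < h0 := lt_min (by positivity) (by positivity)
      obtain ⟨n, hn⟩ := exists_nat_gt ((b - a) / h0)
      have hn0 : 0 < (n:ℝ) := lt_trans (by positivity) hn
      have hnne : (n:ℝ) ≠ 0 := hn0.ne'
      set k := (b - a) / n with hkdef
      have hk : 0 < k := by positivity
      have hkh0 : k ≤ h0 := by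
        rw [hkdef, div_le_iff₀ hn0]
        have h7 := (div_lt_iff₀ hh0).1 hn
        nlinarith
      have hnk : (n:ℝ) * k = b - a := by rw [hkdef]; field_simp
      set g : ℕ → ℝ := fun i => W (a + i * k) with hgdef
      have hg0 : g 0 = W a := by simp [hgdef]
      have hgn : g n = W b := by
        simp only [hgdef]
        have h8 : a + (n:ℝ) * k = b := by rw [hnk]; ring
        rw [h8]
      have tele : W b - W a = ∑ i ∈ Finset.range n, (g (i + 1) - g i) := by
        rw [Finset.sum_range_sub g, hg0, hgn]
      set D : ℝ := k ^ 2 * C + 2 * k * (τ (a + m ^ 2 / k) - σ) with hDdef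
      have term : ∀ i ∈ Finset.range n, |g (i + 1) - g i| ≤ D := by
        intro i hi
        have hi' : (i:ℝ) + 1 ≤ n := by exact_mod_cast Nat.succ_le_of_lt (Finset.mem_range.1 hi)
        have hti : a + i * k ∈ Set.Icc a b := by
          constructor
          · nlinarith [hk.le, Nat.cast_nonneg (α := ℝ) i]
          · nlinarith [hk.le, hnk]
        have h9 := step (a + i * k) hti k hk
        have harg : g (i + 1) = W (a + i * k + k) := by
          simp only [hgdef]
          push_cast
          ring_nf
        rw [harg]
        simp only [hgdef]
        exact h9
      have hsum : |W b - W a| ≤ n * D := by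
        rw [tele]
        calc |∑ i ∈ Finset.range n, (g (i + 1) - g i)|
            ≤ ∑ i ∈ Finset.range n, |g (i + 1) - g i| := Finset.abs_sum_le_sum_abs _ _
        _ ≤ ∑ _i ∈ Finset.range n, D := Finset.sum_le_sum term
        _ = n * D := by rw [Finset.sum_const, Finset.card_range, nsmul_eq_mul]
      have hbound1 : (n:ℝ) * (k ^ 2 * C) ≤ η / 2 := by
        have hkle : k ≤ η / (2 * (b - a) * C) := le_trans hkh0 (min_le_left _ _)
        have h10 : (n:ℝ) * (k ^ 2 * C) = (b - a) * k * C := by rw [← hnk]; ring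
        rw [h10]
        calc (b - a) * k * C ≤ (b - a) * (η / (2 * (b - a) * C)) * C := by gcongr
        _ = η / 2 := by field_simp
      have hτb : τ (a + m ^ 2 / k) ≤ τ r₀ := by
        apply τanti
        have hkle : k ≤ m ^ 2 / (|r₀ - a| + 1) := le_trans hkh0 (min_le_right _ _)
        have h11 : |r₀ - a| + 1 ≤ m ^ 2 / k := by
          rw [le_div_iff₀ hk]
          calc (|r₀ - a| + 1) * k ≤ (|r₀ - a| + 1) * (m ^ 2 / (|r₀ - a| + 1)) := by gcongr
          _ = m ^ 2 := by field_simp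
        have h12 : r₀ - a ≤ |r₀ - a| := le_abs_self _
        linarith
      have hbound2 : (n:ℝ) * (2 * k * (τ (a + m ^ 2 / k) - σ)) ≤ η / 2 := by
        have h13 : τ (a + m ^ 2 / k) - σ ≤ η / (4 * (b - a)) := by linarith
        have h14 : 0 ≤ τ (a + m ^ 2 / k) - σ := sub_nonneg.2 (hσle _)
        have h15 : (n:ℝ) * (2 * k * (τ (a + m ^ 2 / k) - σ))
            = 2 * (b - a) * (τ (a + m ^ 2 / k) - σ) := by rw [← hnk]; ring
        rw [h15]
        calc 2 * (b - a) * (τ (a + m ^ 2 / k) - σ)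
            ≤ 2 * (b - a) * (η / (4 * (b - a))) := by gcongr
        _ = η / 2 := by field_simp; ring
      have h16 : (n:ℝ) * D = (n:ℝ) * (k ^ 2 * C) + (n:ℝ) * (2 * k * (τ (a + m ^ 2 / k) - σ)) := by
        rw [hDdef]; ring
      calc |W b - W a| ≤ (n:ℝ) * D := hsum
      _ = (n:ℝ) * (k ^ 2 * C) + (n:ℝ) * (2 * k * (τ (a + m ^ 2 / k) - σ)) := h16
      _ ≤ η / 2 + η / 2 := add_le_add hbound1 hbound2
      _ = η := by ring
    have habs0 : |W b - W a| ≤ 0 := by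
      by_contra hpos
      push_neg at hpos
      have := key (|W b - W a| / 2) (by linarith)
      linarith
    have := abs_nonpos_iff.1 habs0
    linarith [sub_eq_zero.1 this]
  -- conclude
  refine ⟨σ, fun t => ?_⟩
  have hW0 : W 0 = 1 := by simp [hWdef, F0]
  have hWt : W t = 1 := by
    rcases lt_trichotomy t 0 with h' | h' | h'
    · rw [← hW0]; exact (Wconst t 0 h').symm
    · rw [h', hW0]
    · rw [← hW0, Wconst 0 t h']
  simp only [hWdef] at hWt
  show F t ^ 2 = t ^ 2 + 2 * σ * t + 1
  linarith

end LorchAux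

theorem lorch_characterization {X : Type*} [NormedAddCommGroup X] [NormedSpace ℝ X]
    (h : ∀ x y : X, ‖x‖ = ‖y‖ → ∀ γ : ℝ, γ ≠ 0 → ‖x + y‖ ≤ ‖γ • x + γ⁻¹ • y‖) :
    ∀ x y : X, ‖x + y‖ ^ 2 + ‖x - y‖ ^ 2 = 2 * ‖x‖ ^ 2 + 2 * ‖y‖ ^ 2 := by
  intro x y
  rcases eq_or_ne x 0 with hx | hx
  · subst hx; simp [norm_neg]; ring
  rcases eq_or_ne y 0 with hy | hy
  · subst hy; simp; ring
  by_cases hdep : ∃ c : ℝ, y = c • x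
  · obtain ⟨c, rfl⟩ := hdep
    have h1 : x + c • x = (1 + c) • x := by module
    have h2 : x - c • x = (1 - c) • x := by module
    rw [h1, h2, norm_smul, norm_smul, norm_smul, Real.norm_eq_abs, Real.norm_eq_abs,
      Real.norm_eq_abs]
    simp only [mul_pow, sq_abs]
    ring
  · push_neg at hdep
    set a := ‖x‖ with hadef
    set b := ‖y‖ with hbdef
    have ha : 0 < a := norm_pos_iff.2 hx
    have hb : 0 < b := norm_pos_iff.2 hy
    set u := a⁻¹ • x with hudef
    set v := b⁻¹ • y with hvdef
    have hu : ‖u‖ = 1 := by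
      rw [hudef, norm_smul, Real.norm_eq_abs, abs_of_pos (by positivity), ← hadef,
        inv_mul_cancel₀ ha.ne']
    have hv : ‖v‖ = 1 := by
      rw [hvdef, norm_smul, Real.norm_eq_abs, abs_of_pos (by positivity), ← hbdef,
        inv_mul_cancel₀ hb.ne']
    have hind : ∀ t : ℝ, u + t • v ≠ 0 := by
      intro t h0
      have ht : t ≠ 0 := by
        intro ht0
        rw [ht0] at h0
        simp only [zero_smul, add_zero, hudef] at h0
        exact hx (by simpa [smul_eq_zero, inv_ne_zero ha.ne'] using h0)
      apply hdep (-(b * (a⁻¹ * t⁻¹ * 1)))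
      -- from u + t • v = 0 : y = ... • x
      have h1 : u = -(t • v) := by rwa [add_eq_zero_iff_eq_neg] at h0
      have h2 : a⁻¹ • x = (-(t * b⁻¹)) • y := by
        rw [hudef] at h1
        rw [h1, hvdef, smul_smul]
        module
      have h3 : y = (-(b * (a⁻¹ * t⁻¹ * 1))) • x := by
        have h4 : x = a • ((-(t * b⁻¹)) • y) := by
          rw [← h2, smul_smul, mul_inv_cancel₀ ha.ne', one_smul]
        rw [h4, smul_smul, smul_smul]
        rw [show -(b * (a⁻¹ * t⁻¹ * 1)) * a * -(t * b⁻¹) = (1:ℝ) by field_simp, one_smul]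
      exact h3
    obtain ⟨σ, hσ⟩ := lorch_pyth h u v hu hv hind
    have e1 : x + y = a • (u + (b / a) • v) := by
      rw [hudef, hvdef]
      match_scalars <;> field_simp
    have e2 : x - y = a • (u + (-(b / a)) • v) := by
      rw [hudef, hvdef]
      match_scalars <;> field_simp
    rw [e1, e2, norm_smul, norm_smul, Real.norm_eq_abs, abs_of_pos ha, mul_pow, mul_pow,
      hσ (b / a), hσ (-(b / a))]
    field_simp
    ring
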